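/- Any connected Lie group that admits a discrete subgroup with compact quotient is unimodular (in particular it admits a bi-invariant volume form). -/

import Mathlib

open MeasureTheory
open scoped Topology Pointwise ENNReal NNReal

section Aux

variable {H : Type*}

/-- A connected, weakly locally compact topological group is σ-compact. -/
private lemma aux_sigmaCompact [Group H] [TopologicalSpace H] [IsTopologicalGroup H]
    [ConnectedSpace H] [WeaklyLocallyCompactSpace H] : SigmaCompactSpace H := by
  obtain ⟨K, hKc, hK1⟩ := exists_compact_mem_nhds (1 : H)
  set S : Set H := K ∪ K⁻¹ with hS
  have hScompact : IsCompact S := hKc.union hKc.inv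
  have h1S : (1 : H) ∈ S := Or.inl (mem_of_mem_nhds hK1)
  have hSsymm : ∀ x ∈ S, x⁻¹ ∈ S := by
    rintro x (hx | hx)
    · exact Or.inr (Set.inv_mem_inv.mpr hx)
    · exact Or.inl (by simpa using hx)
  have hpow : ∀ n : ℕ, IsCompact (S ^ (n + 1)) := by
    intro n; induction n with
    | zero => simpa using hScompact
    | succ n ih => rw [pow_succ]; exact ih.mul hScompact
  have hpow_inv : ∀ n : ℕ, ∀ x ∈ S ^ (n + 1), x⁻¹ ∈ S ^ (n + 1) := by
    intro n; induction n with
    | zero => intro x hx; simpa using hSsymm x (by simpa using hx)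
    | succ n ih =>
      intro x hx
      rw [pow_succ] at hx
      obtain ⟨y, hy, s, hs, rfl⟩ := Set.mem_mul.1 hx
      rw [mul_inv_rev, pow_succ']
      exact Set.mul_mem_mul (hSsymm s hs) (ih y hy)
  have hsub : (Subgroup.closure S : Set H) ⊆ ⋃ n : ℕ, S ^ (n + 1) := by
    intro x hx
    refine Subgroup.closure_induction (fun x hx => ?_) ?_
      (fun x y _ _ hx hy => ?_) (fun x _ hx => ?_) hx
    · exact Set.mem_iUnion.2 ⟨0, by simpa using hx⟩
    · exact Set.mem_iUnion.2 ⟨0, by simpa using h1S⟩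
    · obtain ⟨a, ha⟩ := Set.mem_iUnion.1 hx
      obtain ⟨b, hb⟩ := Set.mem_iUnion.1 hy
      refine Set.mem_iUnion.2 ⟨a + b + 1, ?_⟩
      have he : (a + 1) + (b + 1) = (a + b + 1) + 1 := by omega
      rw [← he, pow_add]
      exact Set.mul_mem_mul ha hb
    · obtain ⟨a, ha⟩ := Set.mem_iUnion.1 hx
      exact Set.mem_iUnion.2 ⟨a, hpow_inv a x ha⟩
  have hopen : IsOpen (Subgroup.closure S : Set H) :=
    Subgroup.isOpen_of_mem_nhds _
      (Filter.mem_of_superset hK1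
        (Set.Subset.trans Set.subset_union_left Subgroup.subset_closure))
  have huniv : (Subgroup.closure S : Set H) = Set.univ :=
    (OpenSubgroup.isClopen ⟨Subgroup.closure S, hopen⟩).eq_univ ⟨1, Subgroup.one_mem _⟩
  refine ⟨⟨fun n => S ^ (n + 1), hpow, ?_⟩⟩
  apply Set.eq_univ_of_univ_subset
  rw [← huniv]
  exact hsub

/-- A discrete subgroup of a second countable topological group is countable. -/
private lemma aux_countable [Group H] [TopologicalSpace H] [SecondCountableTopology H]
    (Γ : Subgroup H) [DiscreteTopology Γ] : Countable Γ := by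
  obtain ⟨s, hsc, hsd⟩ := TopologicalSpace.exists_countable_dense Γ
  have hs : s = Set.univ := by
    have h := hsd.closure_eq
    rwa [IsClosed.closure_eq (isClosed_discrete s)] at h
  rw [hs] at hsc
  exact Set.countable_univ_iff.mp hsc

end Aux

/-- **Lemma (Milnor).** Any connected Lie group `G` that admits a discrete subgroup `Γ` with
compact quotient is unimodular: every left-invariant Haar measure on `G` is also
right-invariant (in particular, `G` admits a bi-invariant volume form). -/
theorem unimodular_of_discrete_cocompact
    {E : Type*} [NormedAddCommGroup E] [NormedSpace ℝ E] [FiniteDimensional ℝ E]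
    {G : Type*} [TopologicalSpace G] [ChartedSpace E G] [Group G] [IsTopologicalGroup G]
    [LieGroup (modelWithCornersSelf ℝ E) (⊤ : ℕ∞) G] [ConnectedSpace G]
    [MeasurableSpace G] [BorelSpace G]
    (Γ : Subgroup G) [DiscreteTopology Γ] [CompactSpace (G ⧸ Γ)]
    (μ : Measure G) [μ.IsHaarMeasure] :
    μ.IsMulRightInvariant := by
  classical
  haveI : LocallyCompactSpace G := ChartedSpace.locallyCompactSpace E G
  haveI : SigmaCompactSpace G := aux_sigmaCompact
  haveI : SecondCountableTopology G := ChartedSpace.secondCountable_of_sigmaCompact E G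
  haveI : Countable Γ := aux_countable Γ
  -- a neighborhood of 1 meeting Γ only in 1
  obtain ⟨U, hU1, hUΓ⟩ : ∃ U ∈ 𝓝 (1 : G), ∀ γ : Γ, (γ : G) ∈ U → γ = 1 := by
    have h : ({1} : Set Γ) ∈ 𝓝 (1 : Γ) := by simp [nhds_discrete]
    rw [nhds_subtype_eq_comap] at h
    obtain ⟨U, hU, hsub⟩ := h
    exact ⟨U, by simpa using hU, fun γ hγ => hsub hγ⟩
  -- an open V ∋ 1 with V⁻¹ V ⊆ U
  obtain ⟨V, hVopen, hV1, hVU⟩ :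
      ∃ V : Set G, IsOpen V ∧ (1 : G) ∈ V ∧ ∀ a ∈ V, ∀ b ∈ V, a⁻¹ * b ∈ U := by
    have hcont : Continuous fun p : G × G => p.1⁻¹ * p.2 := by continuity
    have htends : Filter.Tendsto (fun p : G × G => p.1⁻¹ * p.2) (𝓝 ((1 : G), (1 : G))) (𝓝 1) := by
      have := hcont.tendsto ((1 : G), (1 : G))
      simpa using this
    have hpre : (fun p : G × G => p.1⁻¹ * p.2) ⁻¹' U ∈ 𝓝 ((1 : G), (1 : G)) := htends hU1
    rw [mem_nhds_prod_iff] at hpre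
    obtain ⟨u, hu, v, hv, huv⟩ := hpre
    refine ⟨interior (u ∩ v), isOpen_interior,
      mem_interior_iff_mem_nhds.2 (Filter.inter_mem hu hv), ?_⟩
    intro a ha b hb
    have ha' : a ∈ u ∩ v := interior_subset ha
    have hb' : b ∈ u ∩ v := interior_subset hb
    exact huv (Set.mk_mem_prod ha'.1 hb'.2)
  -- a compact set K₀ meeting every right coset of Γ
  obtain ⟨K₀, hK₀c, hK₀⟩ : ∃ K₀ : Set G, IsCompact K₀ ∧ ∀ x : G, ∃ k ∈ K₀, ∃ γ : Γ, k = x * γ := by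
    have hopenmap : IsOpenMap (QuotientGroup.mk : G → G ⧸ Γ) := QuotientGroup.isOpenMap_coe
    choose C hCc hCmem using fun x : G => exists_compact_mem_nhds x
    have hcover : (Set.univ : Set (G ⧸ Γ)) ⊆
        ⋃ x : G, (QuotientGroup.mk : G → G ⧸ Γ) '' interior (C x) := by
      rintro q -
      obtain ⟨x, rfl⟩ := QuotientGroup.mk_surjective q
      exact Set.mem_iUnion.2 ⟨x, ⟨x, mem_interior_iff_mem_nhds.2 (hCmem x), rfl⟩⟩
    obtain ⟨T, hT⟩ := isCompact_univ.elim_finite_subcover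
      (fun x : G => (QuotientGroup.mk : G → G ⧸ Γ) '' interior (C x))
      (fun x => hopenmap _ isOpen_interior) hcover
    refine ⟨⋃ x ∈ T, C x, T.finite_toSet.isCompact_biUnion (fun x _ => hCc x), ?_⟩
    intro x
    have hx : (QuotientGroup.mk x : G ⧸ Γ) ∈
        ⋃ y ∈ T, (QuotientGroup.mk : G → G ⧸ Γ) '' interior (C y) := hT (Set.mem_univ _)
    rw [Set.mem_iUnion₂] at hx
    obtain ⟨y, hyT, k, hk, hkx⟩ := hx
    have hmem : x⁻¹ * k ∈ Γ := by
      rw [← QuotientGroup.eq]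
      exact hkx.symm
    refine ⟨k, Set.mem_biUnion hyT (interior_subset hk), ⟨x⁻¹ * k, hmem⟩, ?_⟩
    simp [mul_assoc]
  -- shrink V to sit inside a compact set
  obtain ⟨Kc, hKcc, hKc1⟩ := exists_compact_mem_nhds (1 : G)
  set V' : Set G := V ∩ interior Kc with hV'
  have hV'open : IsOpen V' := hVopen.inter isOpen_interior
  have hV'1 : (1 : G) ∈ V' := ⟨hV1, mem_interior_iff_mem_nhds.2 hKc1⟩
  -- finitely many left translates of V' cover K₀
  obtain ⟨t, ht⟩ : ∃ t : Finset G, K₀ ⊆ ⋃ g ∈ t, (fun y => g⁻¹ * y) ⁻¹' V' := by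
    refine hK₀c.elim_finite_subcover (fun g : G => (fun y => g⁻¹ * y) ⁻¹' V')
      (fun g => hV'open.preimage (continuous_const.mul continuous_id)) ?_
    intro k _
    exact Set.mem_iUnion.2 ⟨k, by simp [hV'1]⟩
  -- enumerate the translates and build a strict fundamental domain F
  set L : List G := t.toList with hL
  set n : ℕ := L.length with hn
  set gs : ℕ → G := fun i => L.getD i 1 with hgs
  set W : ℕ → Set G := fun i => (fun y => (gs i)⁻¹ * y) ⁻¹' V' with hW
  have hWopen : ∀ i, IsOpen (W i) :=
    fun i => hV'open.preimage (continuous_const.mul continuous_id)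
  set sat : Set G → Set G := fun A => ⋃ γ : Γ, (fun y => y * (γ : G)) ⁻¹' A with hsat
  have hsatopen : ∀ A, IsOpen A → IsOpen (sat A) :=
    fun A hA => isOpen_iUnion fun γ => hA.preimage (continuous_id.mul continuous_const)
  set D : ℕ → Set G := fun i =>
    if i < n then W i \ ⋃ j, ⋃ (_ : j < i), sat (W j) else ∅ with hD
  set F : Set G := ⋃ i, D i with hF
  have hDmeas : ∀ i, MeasurableSet (D i) := by
    intro i
    by_cases h : i < n
    · simp only [hD, if_pos h]
      exact (hWopen i).measurableSet.diff
        (MeasurableSet.iUnion fun j => MeasurableSet.iUnion fun _ =>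
          (hsatopen _ (hWopen j)).measurableSet)
    · simp only [hD, if_neg h]
      exact MeasurableSet.empty
  have hFmeas : MeasurableSet F := MeasurableSet.iUnion hDmeas
  -- each orbit meets some W i
  have hcov : ∀ x : G, ∃ i, i < n ∧ ∃ γ : Γ, x * (γ : G) ∈ W i := by
    intro x
    obtain ⟨k, hkK₀, γ, hkγ⟩ := hK₀ x
    have hk' := ht hkK₀
    rw [Set.mem_iUnion₂] at hk'
    obtain ⟨g, hgT, hgk⟩ := hk'
    obtain ⟨i, hi, hgi⟩ := List.mem_iff_getElem.1 (Finset.mem_toList.2 hgT)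
    refine ⟨i, hi, γ, ?_⟩
    show (gs i)⁻¹ * (x * (γ : G)) ∈ V'
    rw [hgs]
    simp only
    rw [List.getD_eq_getElem L 1 hi, hgi, ← hkγ]
    exact hgk
  -- existence: every orbit meets F
  have hFexists : ∀ x : G, ∃ γ : Γ, x * (γ : G) ∈ F := by
    intro x
    have hP := hcov x
    obtain ⟨hi₀n, γ₀, hγ₀⟩ := Nat.find_spec hP
    refine ⟨γ₀, Set.mem_iUnion.2 ⟨Nat.find hP, ?_⟩⟩
    simp only [hD, if_pos hi₀n]
    refine ⟨hγ₀, ?_⟩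
    intro hmem
    rw [Set.mem_iUnion] at hmem
    obtain ⟨j, hmem⟩ := hmem
    rw [Set.mem_iUnion] at hmem
    obtain ⟨hj, hmem⟩ := hmem
    rw [hsat] at hmem
    simp only [Set.mem_iUnion, Set.mem_preimage] at hmem
    obtain ⟨γ', hγ'⟩ := hmem
    refine Nat.find_min hP hj ⟨lt_trans hj hi₀n, γ₀ * γ', ?_⟩
    rw [Subgroup.coe_mul, ← mul_assoc]
    exact hγ'
  -- uniqueness
  have hFuniq : ∀ x : G, ∀ γ₁ γ₂ : Γ, x * (γ₁ : G) ∈ F → x * (γ₂ : G) ∈ F → γ₁ = γ₂ := by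
    have hgen : ∀ x : G, ∀ γ₁ γ₂ : Γ, ∀ i₁ i₂ : ℕ,
        x * (γ₁ : G) ∈ D i₁ → x * (γ₂ : G) ∈ D i₂ → i₁ < i₂ → False := by
      intro x γ₁ γ₂ i₁ i₂ h1 h2 hlt
      have hn₁ : i₁ < n := by
        by_contra h
        simp [hD, if_neg h] at h1
      have hn₂ : i₂ < n := by
        by_contra h
        simp [hD, if_neg h] at h2
      simp only [hD, if_pos hn₁] at h1
      simp only [hD, if_pos hn₂] at h2
      refine h2.2 ?_
      rw [Set.mem_iUnion]
      refine ⟨i₁, ?_⟩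
      rw [Set.mem_iUnion]
      refine ⟨hlt, ?_⟩
      rw [hsat]
      simp only [Set.mem_iUnion, Set.mem_preimage]
      refine ⟨γ₂⁻¹ * γ₁, ?_⟩
      have he : x * (γ₂ : G) * ((γ₂⁻¹ * γ₁ : Γ) : G) = x * (γ₁ : G) := by
        rw [Subgroup.coe_mul]
        simp [mul_assoc]
      rw [he]
      exact h1.1
    intro x γ₁ γ₂ h1 h2
    obtain ⟨i₁, hi₁⟩ := Set.mem_iUnion.1 h1
    obtain ⟨i₂, hi₂⟩ := Set.mem_iUnion.1 h2
    rcases lt_trichotomy i₁ i₂ with h | h | h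
    · exact absurd (hgen x γ₁ γ₂ i₁ i₂ hi₁ hi₂ h) (fun hf => hf)
    · subst h
      have hn₁ : i₁ < n := by
        by_contra hc
        simp [hD, if_neg hc] at hi₁
      simp only [hD, if_pos hn₁] at hi₁ hi₂
      have ha : (gs i₁)⁻¹ * (x * (γ₁ : G)) ∈ V' := hi₁.1
      have hb : (gs i₁)⁻¹ * (x * (γ₂ : G)) ∈ V' := hi₂.1
      have hab := hVU _ ha.1 _ hb.1
      have he : ((gs i₁)⁻¹ * (x * (γ₁ : G)))⁻¹ * ((gs i₁)⁻¹ * (x * (γ₂ : G)))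
          = ((γ₁⁻¹ * γ₂ : Γ) : G) := by
        rw [Subgroup.coe_mul]
        simp only [Subgroup.coe_inv]
        group
      rw [he] at hab
      have h1' : γ₁⁻¹ * γ₂ = 1 := hUΓ _ hab
      exact inv_mul_eq_one.1 h1'
    · exact absurd (hgen x γ₂ γ₁ i₂ i₁ hi₂ hi₁ h) (fun hf => hf)
  -- F is contained in a compact set
  set K₁ : Set G := ⋃ g ∈ t, (fun y => g * y) '' Kc with hK₁
  have hK₁c : IsCompact K₁ :=
    t.finite_toSet.isCompact_biUnion
      (fun g _ => hKcc.image (continuous_const.mul continuous_id))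
  have hFK₁ : F ⊆ K₁ := by
    intro x hx
    obtain ⟨i, hi⟩ := Set.mem_iUnion.1 hx
    have hin : i < n := by
      by_contra hc
      simp [hD, if_neg hc] at hi
    simp only [hD, if_pos hin] at hi
    have hxW : (gs i)⁻¹ * x ∈ V' := hi.1
    have hgmem : gs i ∈ t := by
      rw [hgs]
      simp only
      rw [List.getD_eq_getElem L 1 hin]
      exact Finset.mem_toList.1 (List.getElem_mem hin)
    refine Set.mem_biUnion hgmem ⟨(gs i)⁻¹ * x, interior_subset hxW.2, by group⟩
  -- translated copies of F
  set P : G → Γ → Set G := fun x γ => (fun y => x⁻¹ * y * (γ : G)) ⁻¹' F with hP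
  have hPmeas : ∀ x γ, MeasurableSet (P x γ) := fun x γ =>
    hFmeas.preimage (((continuous_const.mul continuous_id).mul continuous_const).measurable)
  have hPuniq : ∀ x y : G, ∃! γ : Γ, y ∈ P x γ := by
    intro x y
    obtain ⟨γ, hγ⟩ := hFexists (x⁻¹ * y)
    exact ⟨γ, hγ, fun δ hδ => hFuniq (x⁻¹ * y) δ γ hδ hγ⟩
  -- partition identity, valid for an arbitrary measure
  have hpart : ∀ (ν : Measure G) (x : G) (s : Set G), MeasurableSet s →
      ν s = ∑' γ : Γ, ν (s ∩ P x γ) := by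
    intro ν x s hs
    have hcover : s = ⋃ γ : Γ, s ∩ P x γ := by
      ext y
      constructor
      · intro hy
        obtain ⟨γ, hγ, -⟩ := hPuniq x y
        exact Set.mem_iUnion.2 ⟨γ, hy, hγ⟩
      · intro hy
        obtain ⟨γ, hγ⟩ := Set.mem_iUnion.1 hy
        exact hγ.1
    have hdisj : Pairwise (Function.onFun Disjoint fun γ : Γ => s ∩ P x γ) := by
      intro γ δ hne
      refine Set.disjoint_left.2 fun y hyγ hyδ => hne ?_
      exact (hPuniq x y).unique hyγ.2 hyδ.2
    calc ν s = ν (⋃ γ : Γ, s ∩ P x γ) := by rw [← hcover]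
    _ = ∑' γ : Γ, ν (s ∩ P x γ) :=
        measure_iUnion hdisj (fun γ => hs.inter (hPmeas x γ))
  -- right-translation rule for the P's
  have hRP : ∀ (x : G) (γ δ : Γ),
      (fun y => y * (γ : G)) ⁻¹' (P x δ) = P x (γ * δ) := by
    intro x γ δ
    ext y
    show x⁻¹ * (y * (γ : G)) * (δ : G) ∈ F ↔ x⁻¹ * y * ((γ * δ : Γ) : G) ∈ F
    rw [Subgroup.coe_mul, mul_assoc, mul_assoc, mul_assoc]
  -- the right-invariant measure ρ = μ.inv
  set ρ : Measure G := μ.inv with hρ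
  have hρinv : ∀ (γ : Γ) (A : Set G), ρ ((fun y => y * (γ : G)) ⁻¹' A) = ρ A :=
    fun γ A => measure_preimage_mul_right ρ (γ : G) A
  -- the key invariance: ρ (x • F) = ρ F
  have hkey : ∀ x : G, ρ (P x 1) = ρ (P 1 1) := by
    intro x
    calc ρ (P x 1) = ∑' γ : Γ, ρ (P x 1 ∩ P 1 γ) := hpart ρ 1 (P x 1) (hPmeas x 1)
    _ = ∑' γ : Γ, ρ (P 1 1 ∩ P x γ⁻¹) := by
        refine tsum_congr fun γ => ?_
        calc ρ (P x 1 ∩ P 1 γ)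
            = ρ ((fun y => y * ((γ⁻¹ : Γ) : G)) ⁻¹' (P x 1 ∩ P 1 γ)) := (hρinv γ⁻¹ _).symm
        _ = ρ (P x (γ⁻¹ * 1) ∩ P 1 (γ⁻¹ * γ)) := by rw [Set.preimage_inter, hRP, hRP]
        _ = ρ (P 1 1 ∩ P x γ⁻¹) := by rw [mul_one, inv_mul_cancel, Set.inter_comm]
    _ = ∑' γ : Γ, ρ (P 1 1 ∩ P x γ) := (Equiv.inv Γ).tsum_eq fun γ => ρ (P 1 1 ∩ P x γ)
    _ = ρ (P 1 1) := (hpart ρ x (P 1 1) (hPmeas 1 1)).symm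
  have hP11 : P 1 1 = F := by
    ext y
    show 1⁻¹ * y * ((1 : Γ) : G) ∈ F ↔ y ∈ F
    simp
  -- positivity and finiteness of ρ F
  have hfin : ρ F < ⊤ := lt_of_le_of_lt (measure_mono hFK₁) hK₁c.measure_lt_top
  have hpos : ρ F ≠ 0 := by
    intro h0
    have hzero : ∀ γ : Γ, ρ (Set.univ ∩ P 1 γ) = 0 := by
      intro γ
      rw [Set.univ_inter]
      have hPγ : P 1 γ = (fun y => y * (γ : G)) ⁻¹' (P 1 1) := by
        rw [hRP, mul_one]
      rw [hPγ, hρinv, hP11, h0]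
    have huniv0 : ρ Set.univ = 0 := by
      rw [hpart ρ 1 Set.univ MeasurableSet.univ, tsum_congr hzero, tsum_zero]
    exact (isOpen_univ.measure_pos ρ Set.univ_nonempty).ne' huniv0
  -- conclusion via uniqueness of Haar measure
  constructor
  intro g
  set μ' : Measure G := Measure.map (· * g) μ with hμ'
  haveI : μ'.IsMulLeftInvariant := by
    rw [hμ']; infer_instance
  haveI : IsFiniteMeasureOnCompacts μ' := by
    constructor
    intro K hK
    rw [hμ']
    have hmap : Measure.map (· * g) μ K = μ ((fun y => y * g) ⁻¹' K) :=
      (MeasurableEquiv.mulRight g).map_apply K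
    rw [hmap]
    have hcompact : IsCompact ((fun y => y * g) ⁻¹' K) :=
      (Homeomorph.mulRight g).isCompact_preimage.2 hK
    exact hcompact.measure_lt_top
  have huni : μ' = μ'.haarScalarFactor μ • μ :=
    Measure.isMulLeftInvariant_eq_smul μ' μ
  have hFinv : μ' F⁻¹ = μ F⁻¹ := by
    have hmap : μ' F⁻¹ = μ ((fun y => y * g) ⁻¹' F⁻¹) := by
      rw [hμ']; exact (MeasurableEquiv.mulRight g).map_apply F⁻¹
    have hset : (fun y => y * g) ⁻¹' F⁻¹ = (P g 1)⁻¹ := by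
      ext y
      show (y * g)⁻¹ ∈ F ↔ y⁻¹ ∈ P g 1
      show (y * g)⁻¹ ∈ F ↔ g⁻¹ * y⁻¹ * ((1 : Γ) : G) ∈ F
      rw [mul_inv_rev]
      simp
    rw [hmap, hset, ← Measure.inv_apply μ (P g 1)]
    have : μ.inv (P g 1) = μ.inv (P 1 1) := hkey g
    rw [this, hP11, Measure.inv_apply]
  have hμFne : μ F⁻¹ ≠ 0 := by
    rw [← Measure.inv_apply]; exact hpos
  have hμFfin : μ F⁻¹ ≠ ⊤ := by
    rw [← Measure.inv_apply]; exact hfin.ne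
  rw [huni] at hFinv
  rw [Measure.smul_apply, ENNReal.smul_def, smul_eq_mul] at hFinv
  have hc : (μ'.haarScalarFactor μ : ℝ≥0∞) = 1 := by
    have h1 : (μ'.haarScalarFactor μ : ℝ≥0∞) * μ F⁻¹ = 1 * μ F⁻¹ := by
      rw [one_mul]; exact hFinv
    exact (ENNReal.mul_left_inj hμFne hμFfin).1 h1
  have hc' : μ'.haarScalarFactor μ = 1 := by
    exact_mod_cast hc
  show Measure.map (· * g) μ = μ
  rw [← hμ', huni, hc', one_smul]
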